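/- arXiv:1902.04693 — 2 statements merged into one kernel-verified Lean document; each statement's English description precedes it below -/
import Mathlib

section
/- Let P_i = (x_i, y_i) ∈ ℝ², i = 1,2,3,4, and define a₁ = x₂−x₁, a₂ = x₄−x₁, a₃ = x₁−x₂+x₃−x₄, b₁ = y₂−y₁, b₂ = y₄−y₁, b₃ = y₁−y₂+y₃−y₄, and the Jacobian matrix J(ξ,η) = [[a₁+a₃η, a₂+a₃ξ],[b₁+b₃η, b₂+b₃ξ]]. Let û(ξ,η) = u₁(1−ξ)(1−η) + u₂ξ(1−η) + u₃ξη + u₄(1−ξ)η for real numbers u₁,u₂,u₃,u₄, and set q₁ = (y₂−y₄, x₄−x₂) and q₂ = (y₃−y₁, x₁−x₃). Then J(1/2,1/2)^T · ((u₁−u₃)·q₁ + (u₂−u₄)·q₂) = 2·det J(1/2,1/2) · ∇û(1/2,1/2), where ∇û(1/2,1/2) = ((u₂+u₃−u₁−u₄)/2, (u₃+u₄−u₁−u₂)/2). Consequently, if det J(1/2,1/2) ≠ 0, the gradient of the isoparametric bilinear interpolant u_h = û ∘ F^{-1} at the barycenter Q = F(1/2,1/2) equals ((u₁−u₃)/(2·det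 J(1/2,1/2)))·q₁ + ((u₂−u₄)/(2·det J(1/2,1/2)))·q₂. -/
open Matrix

/-- Equation (3.3) of the paper: with the bilinear reference map `F`, Jacobian
`J`, bilinear shape function `uhat`, diagonal normals `q₁, q₂`, and barycentric
gradient `∇uhat(1/2,1/2)`, we have
`J(1/2,1/2)ᵀ ((u₁−u₃) q₁ + (u₂−u₄) q₂) = 2 det J(1/2,1/2) ∇uhat(1/2,1/2)`;
consequently, when `det J(1/2,1/2) ≠ 0`, the gradient of the isoparametric
bilinear interpolant `u_h = uhat ∘ F⁻¹` at the barycenter `Q = F(1/2,1/2)` is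
`((u₁−u₃)/(2 det J)) q₁ + ((u₂−u₄)/(2 det J)) q₂`. -/
theorem isoparametric_bilinear_gradient_at_barycenter
    (x₁ x₂ x₃ x₄ y₁ y₂ y₃ y₄ u₁ u₂ u₃ u₄ : ℝ)
    (a₁ a₂ a₃ b₁ b₂ b₃ : ℝ)
    (ha₁ : a₁ = x₂ - x₁) (ha₂ : a₂ = x₄ - x₁) (ha₃ : a₃ = x₁ - x₂ + x₃ - x₄)
    (hb₁ : b₁ = y₂ - y₁) (hb₂ : b₂ = y₄ - y₁) (hb₃ : b₃ = y₁ - y₂ + y₃ - y₄)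
    (J : ℝ → ℝ → Matrix (Fin 2) (Fin 2) ℝ)
    (hJ : ∀ ξ η, J ξ η = !![a₁ + a₃ * η, a₂ + a₃ * ξ; b₁ + b₃ * η, b₂ + b₃ * ξ])
    (uhat : (Fin 2 → ℝ) → ℝ)
    (huhat : ∀ w : Fin 2 → ℝ, uhat w =
      u₁ * (1 - w 0) * (1 - w 1) + u₂ * (w 0) * (1 - w 1)
        + u₃ * (w 0) * (w 1) + u₄ * (1 - w 0) * (w 1))
    (q₁ q₂ : Fin 2 → ℝ)
    (hq₁ : q₁ = ![y₂ - y₄, x₄ - x₂]) (hq₂ : q₂ = ![y₃ - y₁, x₁ - x₃])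
    (graduhat : Fin 2 → ℝ)
    (hgraduhat : graduhat = ![(u₂ + u₃ - u₁ - u₄) / 2, (u₃ + u₄ - u₁ - u₂) / 2]) :
    (J (1/2) (1/2))ᵀ.mulVec ((u₁ - u₃) • q₁ + (u₂ - u₄) • q₂)
        = (2 * (J (1/2) (1/2)).det) • graduhat ∧
    ((J (1/2) (1/2)).det ≠ 0 →
      ∀ (F : (Fin 2 → ℝ) → (Fin 2 → ℝ)) (u_h : (Fin 2 → ℝ) → ℝ),
        (∀ w : Fin 2 → ℝ, F w =
          ![x₁ + a₁ * w 0 + a₂ * w 1 + a₃ * w 0 * w 1,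
            y₁ + b₁ * w 0 + b₂ * w 1 + b₃ * w 0 * w 1]) →
        (∀ w : Fin 2 → ℝ, u_h (F w) = uhat w) →
        DifferentiableAt ℝ u_h (F ![1/2, 1/2]) →
        ∀ v : Fin 2 → ℝ,
          fderiv ℝ u_h (F ![1/2, 1/2]) v =
            (((u₁ - u₃) / (2 * (J (1/2) (1/2)).det)) • q₁
              + ((u₂ - u₄) / (2 * (J (1/2) (1/2)).det)) • q₂) ⬝ᵥ v) := by
  constructor
  · subst ha₁ ha₂ ha₃ hb₁ hb₂ hb₃ hq₁ hq₂ hgraduhat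
    rw [hJ]
    funext i
    fin_cases i <;>
      simp [Matrix.mulVec, dotProduct, Fin.sum_univ_two, Matrix.det_fin_two_of] <;> ring
  · intro hdet F u_h hF hu hdiff v
    set p : Fin 2 → ℝ := ![1/2, 1/2] with hp
    set M : Matrix (Fin 2) (Fin 2) ℝ := J (1/2) (1/2) with hM
    have hMe : M = !![a₁ + a₃ * (1/2), a₂ + a₃ * (1/2);
                      b₁ + b₃ * (1/2), b₂ + b₃ * (1/2)] := hJ _ _
    set A : (Fin 2 → ℝ) →L[ℝ] (Fin 2 → ℝ) := M.mulVecLin.toContinuousLinearMap with hA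
    have h0 : HasFDerivAt (fun w : Fin 2 → ℝ => w 0)
        (ContinuousLinearMap.proj (R := ℝ) (φ := fun _ : Fin 2 => ℝ) 0) p :=
      hasFDerivAt_apply 0 p
    have h1 : HasFDerivAt (fun w : Fin 2 → ℝ => w 1)
        (ContinuousLinearMap.proj (R := ℝ) (φ := fun _ : Fin 2 => ℝ) 1) p :=
      hasFDerivAt_apply 1 p
    -- derivative of F
    have hFeq : F = fun w => (![x₁, y₁] + (!![a₁, a₂; b₁, b₂]) *ᵥ w)
        + (w 0 * w 1) • ![a₃, b₃] := by
      funext w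
      rw [hF]
      funext i
      fin_cases i <;>
        simp [Matrix.mulVec, dotProduct, Fin.sum_univ_two] <;> ring
    have hlin : HasFDerivAt (fun w : Fin 2 → ℝ => (!![a₁, a₂; b₁, b₂]) *ᵥ w)
        (!![a₁, a₂; b₁, b₂]).mulVecLin.toContinuousLinearMap p :=
      (!![a₁, a₂; b₁, b₂]).mulVecLin.toContinuousLinearMap.hasFDerivAt
    have hbig := ((hlin.const_add ![x₁, y₁]).add ((h0.mul h1).smul_const ![a₃, b₃]))
    have hFd : HasFDerivAt F A p := by
      rw [hFeq]
      refine hbig.congr_fderiv ?_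
      refine ContinuousLinearMap.ext fun w => funext fun i => ?_
      have e0 : p 0 = 1/2 := rfl
      have e1 : p 1 = 1/2 := rfl
      fin_cases i <;>
        simp [hA, hMe, Matrix.mulVec, dotProduct, Fin.sum_univ_two, e0, e1] <;> ring
    -- derivative of uhat
    set G : (Fin 2 → ℝ) →L[ℝ] ℝ :=
      ((u₂ + u₃ - u₁ - u₄) / 2) • (ContinuousLinearMap.proj (R := ℝ) (φ := fun _ : Fin 2 => ℝ) 0)
        + ((u₃ + u₄ - u₁ - u₂) / 2) • (ContinuousLinearMap.proj (R := ℝ) (φ := fun _ : Fin 2 => ℝ) 1) with hG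
    have hm0 : HasFDerivAt (fun w : Fin 2 → ℝ => 1 - w 0)
        ((0 : (Fin 2 → ℝ) →L[ℝ] ℝ) - ContinuousLinearMap.proj (R := ℝ) (φ := fun _ : Fin 2 => ℝ) 0) p :=
      (hasFDerivAt_const 1 p).sub h0
    have hm1 : HasFDerivAt (fun w : Fin 2 → ℝ => 1 - w 1)
        ((0 : (Fin 2 → ℝ) →L[ℝ] ℝ) - ContinuousLinearMap.proj (R := ℝ) (φ := fun _ : Fin 2 => ℝ) 1) p :=
      (hasFDerivAt_const 1 p).sub h1
    have hU := (((hm0.const_mul u₁).mul hm1).add ((h0.const_mul u₂).mul hm1)).add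
        (((h0.const_mul u₃).mul h1).add ((hm0.const_mul u₄).mul h1))
    have hud : HasFDerivAt uhat G p := by
      have : uhat = fun w => (u₁ * (1 - w 0) * (1 - w 1) + u₂ * (w 0) * (1 - w 1))
          + (u₃ * (w 0) * (w 1) + u₄ * (1 - w 0) * (w 1)) := by
        funext w; rw [huhat]; ring
      rw [this]
      refine hU.congr_fderiv ?_
      refine ContinuousLinearMap.ext fun w => ?_
      have e0 : p 0 = 1/2 := rfl
      have e1 : p 1 = 1/2 := rfl
      simp [hG, e0, e1]
      ring
    -- chain rule
    have hcomp : HasFDerivAt (fun w => u_h (F w)) ((fderiv ℝ u_h (F p)).comp A) p :=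
      hdiff.hasFDerivAt.comp p hFd
    have hfun : (fun w => u_h (F w)) = uhat := funext hu
    rw [hfun] at hcomp
    have hGeq : (fderiv ℝ u_h (F p)).comp A = G := hcomp.unique hud
    have hAv : A (M⁻¹ *ᵥ v) = v := by
      show M *ᵥ (M⁻¹ *ᵥ v) = v
      rw [Matrix.mulVec_mulVec, Matrix.mul_nonsing_inv _ (isUnit_iff_ne_zero.2 hdet),
        Matrix.one_mulVec]
    have : fderiv ℝ u_h (F p) v = G (M⁻¹ *ᵥ v) := by
      calc fderiv ℝ u_h (F p) v = ((fderiv ℝ u_h (F p)).comp A) (M⁻¹ *ᵥ v) := by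
            rw [ContinuousLinearMap.comp_apply, hAv]
        _ = G (M⁻¹ *ᵥ v) := by rw [hGeq]
    rw [this]
    have hdet' : M.det = (a₁ + a₃ * (1/2)) * (b₂ + b₃ * (1/2))
        - (a₂ + a₃ * (1/2)) * (b₁ + b₃ * (1/2)) := by
      rw [hMe, Matrix.det_fin_two_of]
    rw [hG]
    subst hq₁ hq₂
    simp [Matrix.inv_def, Matrix.adjugate_fin_two, hMe, Ring.inverse_eq_inv',
      Matrix.mulVec, dotProduct, Fin.sum_univ_two]
    rw [hdet'] at hdet
    rw [show (1:ℝ)/2 = 2⁻¹ from one_div 2] at hdet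
    subst ha₁ ha₂ ha₃ hb₁ hb₂ hb₃
    clear hU hbig hcomp hud hFd hlin hm0 hm1 h0 h1 hGeq this hAv hfun hdiff hFeq hMe hdet' hF hu huhat hJ
    clear_value A G
    clear hA hG hM hp A G M p
    set d : ℝ := (x₂ - x₁ + (x₁ - x₂ + x₃ - x₄) * 2⁻¹) * (y₄ - y₁ + (y₁ - y₂ + y₃ - y₄) * 2⁻¹)
      - (x₄ - x₁ + (x₁ - x₂ + x₃ - x₄) * 2⁻¹) * (y₂ - y₁ + (y₁ - y₂ + y₃ - y₄) * 2⁻¹) with hd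
    clear_value d
    field_simp [hdet]
    ring
end

section
/- Let A, u₁, u₃, r⁺, r⁻, M, C, h, c be real numbers with r⁺ ≥ 0, r⁻ ≥ 0, u₁ > 0, u₃ > 0, M > 0, C > 0, h > 0, c > 0, and suppose M·u₁ ≥ c·h and M·u₃ ≥ c·h. Define the one-sided flux F₁ = A(u₁−u₃) + r⁺ − r⁻ and the nonlinear two-point flux F₁σ = (A + r⁺M/(M u₁ + C h²))·u₁ − (A + r⁻M/(M u₃ + C h²))·u₃. Then |F₁σ − F₁| ≤ (C/c)·h·(r⁺ + r⁻). -/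
/-- Key estimate in Section 3.2 (truncation error of the nonlinear two-point
flux): with `F₁ = A(u₁−u₃) + r⁺ − r⁻` and
`F₁σ = (A + r⁺M/(Mu₁+Ch²))u₁ − (A + r⁻M/(Mu₃+Ch²))u₃`, under `M u₁ ≥ c h`
and `M u₃ ≥ c h`, one has `|F₁σ − F₁| ≤ (C/c) h (r⁺ + r⁻)`. -/
theorem two_point_flux_modification_bound
    (A u₁ u₃ rp rm M C h c : ℝ)
    (hrp : 0 ≤ rp) (hrm : 0 ≤ rm)
    (hu₁ : 0 < u₁) (hu₃ : 0 < u₃)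
    (hM : 0 < M) (hC : 0 < C) (hh : 0 < h) (hc : 0 < c)
    (hMu₁ : c * h ≤ M * u₁) (hMu₃ : c * h ≤ M * u₃)
    (F₁ F₁σ : ℝ)
    (hF₁ : F₁ = A * (u₁ - u₃) + rp - rm)
    (hF₁σ : F₁σ = (A + rp * M / (M * u₁ + C * h ^ 2)) * u₁
        - (A + rm * M / (M * u₃ + C * h ^ 2)) * u₃) :
    |F₁σ - F₁| ≤ (C / c) * h * (rp + rm) := by
  have hch : 0 < c * h := mul_pos hc hh
  have hd₁ : 0 < M * u₁ + C * h ^ 2 := by positivity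
  have hd₃ : 0 < M * u₃ + C * h ^ 2 := by positivity
  have key : F₁σ - F₁ = rm * (C * h ^ 2) / (M * u₃ + C * h ^ 2)
      - rp * (C * h ^ 2) / (M * u₁ + C * h ^ 2) := by
    subst hF₁ hF₁σ
    field_simp
    ring
  have hb₁ : rp * (C * h ^ 2) / (M * u₁ + C * h ^ 2) ≤ (C / c) * h * rp := by
    rw [div_le_iff₀ hd₁]
    have h1 : (C / c) * h * rp * (c * h) ≤ (C / c) * h * rp * (M * u₁ + C * h ^ 2) := by
      apply mul_le_mul_of_nonneg_left _ (by positivity)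
      nlinarith
    calc rp * (C * h ^ 2) = (C / c) * h * rp * (c * h) := by field_simp
      _ ≤ _ := h1
  have hb₃ : rm * (C * h ^ 2) / (M * u₃ + C * h ^ 2) ≤ (C / c) * h * rm := by
    rw [div_le_iff₀ hd₃]
    have h1 : (C / c) * h * rm * (c * h) ≤ (C / c) * h * rm * (M * u₃ + C * h ^ 2) := by
      apply mul_le_mul_of_nonneg_left _ (by positivity)
      nlinarith
    calc rm * (C * h ^ 2) = (C / c) * h * rm * (c * h) := by field_simp
      _ ≤ _ := h1
  have hpos₁ : 0 ≤ rp * (C * h ^ 2) / (M * u₁ + C * h ^ 2) := by positivity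
  have hpos₃ : 0 ≤ rm * (C * h ^ 2) / (M * u₃ + C * h ^ 2) := by positivity
  rw [key, abs_sub_le_iff]
  constructor <;> nlinarith
end
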